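/- (Alternative formula for the s-value.) Let T : Θ → ℝ be nonnegative, let F : ℝ → ℝ be a continuous, strictly increasing function with F(0) = 0 and F(t) → 1 as t → ∞ (a continuous strictly increasing CDF on [0,∞)), and for α ∈ (0,1) let F_α denote the unique point with F(F_α) = 1 - α, and Λ_α = {θ : T θ ≤ F_α}. Then for any nonempty Θ₀ ⊆ Θ on which T attains its infimum at some θ̂₀ ∈ Θ₀, the s-value satisfies s(Θ₀) = sSup {α ∈ (0,1) : Λ_α ∩ Θ₀ ≠ ∅} = ⨆_{θ ∈ Θ₀} (1 - F(T θ)) = 1 - F(T θ̂₀). -/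
import Mathlib


open Set Filter

theorem s_value_alternative_formula (Θ : Type*) (T : Θ → ℝ)
    (hT : ∀ θ, 0 ≤ T θ)
    (F : ℝ → ℝ) (hFc : Continuous F) (hFm : StrictMonoOn F (Set.Ici 0))
    (hF0 : F 0 = 0) (hFlim : Tendsto F atTop (nhds 1))
    (Fq : ℝ → ℝ) (hFq : ∀ α ∈ Set.Ioo (0:ℝ) 1, 0 ≤ Fq α ∧ F (Fq α) = 1 - α)
    (Λ : ℝ → Set Θ) (hΛ : ∀ α, Λ α = {θ | T θ ≤ Fq α})
    (Θ0 : Set Θ) (hne : Θ0.Nonempty)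
    (θhat0 : Θ) (hθhat0 : θhat0 ∈ Θ0)
    (hinf : T θhat0 = ⨅ θ : Θ0, T θ)
    (s : Set Θ → ℝ)
    (hs : ∀ A : Set Θ, s A = max 0 (sSup {α : ℝ | α ∈ Set.Ioo (0:ℝ) 1 ∧ (Λ α ∩ A).Nonempty})) :
    s Θ0 = sSup {α : ℝ | α ∈ Set.Ioo (0:ℝ) 1 ∧ (Λ α ∩ Θ0).Nonempty} ∧
    sSup {α : ℝ | α ∈ Set.Ioo (0:ℝ) 1 ∧ (Λ α ∩ Θ0).Nonempty} = ⨆ θ : Θ0, (1 - F (T θ)) ∧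
    (⨆ θ : Θ0, (1 - F (T θ))) = 1 - F (T θhat0) := by
  have hΘ0ne : Nonempty Θ0 := ⟨⟨θhat0, hθhat0⟩⟩
  -- minimality of θhat0
  have hmin : ∀ θ ∈ Θ0, T θhat0 ≤ T θ := by
    intro θ hθ
    rw [hinf]
    have hbdd : BddBelow (Set.range fun θ : Θ0 => T θ.1) :=
      ⟨0, by rintro x ⟨y, rfl⟩; exact hT _⟩
    exact ciInf_le hbdd ⟨θ, hθ⟩
  have hFmono : MonotoneOn F (Set.Ici 0) := hFm.monotoneOn
  have hFnonneg : ∀ t, 0 ≤ t → 0 ≤ F t := fun t ht => hF0 ▸ hFmono (le_refl (0:ℝ)) ht ht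
  have hFlt1 : ∀ t, 0 ≤ t → F t < 1 := by
    intro t ht
    have h1 : F t < F (t + 1) := hFm ht (Set.mem_Ici.mpr (by linarith)) (by linarith)
    have h2 : F (t + 1) ≤ 1 := by
      refine ge_of_tendsto hFlim ?_
      filter_upwards [eventually_ge_atTop (t + 1)] with s hs'
      exact hFmono (Set.mem_Ici.mpr (by linarith)) (Set.mem_Ici.mpr (by linarith)) hs'
    linarith
  set m : ℝ := 1 - F (T θhat0) with hm
  have hm0 : 0 < m := by have := hFlt1 _ (hT θhat0); simp [hm]; linarith
  have hm1 : m ≤ 1 := by have := hFnonneg _ (hT θhat0); simp [hm]; linarith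
  set S : Set ℝ := {α : ℝ | α ∈ Set.Ioo (0:ℝ) 1 ∧ (Λ α ∩ Θ0).Nonempty} with hS
  -- characterization of S
  have hSmem : ∀ α, α ∈ S ↔ (0 < α ∧ α < 1 ∧ α ≤ m) := by
    intro α
    constructor
    · rintro ⟨⟨ha0, ha1⟩, θ, hθΛ, hθ0⟩
      refine ⟨ha0, ha1, ?_⟩
      rw [hΛ] at hθΛ
      have hTle : T θhat0 ≤ Fq α := le_trans (hmin θ hθ0) hθΛ
      have hF : F (T θhat0) ≤ F (Fq α) :=
        hFmono (hT θhat0) ((hFq α ⟨ha0, ha1⟩).1) hTle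
      rw [(hFq α ⟨ha0, ha1⟩).2] at hF
      simp only [hm]; linarith
    · rintro ⟨ha0, ha1, ham⟩
      refine ⟨⟨ha0, ha1⟩, θhat0, ?_, hθhat0⟩
      rw [hΛ]
      have h1 : F (T θhat0) ≤ F (Fq α) := by
        rw [(hFq α ⟨ha0, ha1⟩).2]; simp only [hm] at ham; linarith
      have := (hFm.le_iff_le (hT θhat0) (hFq α ⟨ha0, ha1⟩).1).mp h1
      exact this
  have hSne : S.Nonempty := by
    refine ⟨m / 2, (hSmem _).mpr ⟨by linarith, by linarith, by linarith⟩⟩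
  have hSbdd : BddAbove S := ⟨m, fun α hα => ((hSmem α).mp hα).2.2⟩
  have hsSup : sSup S = m := by
    apply le_antisymm
    · exact csSup_le hSne fun α hα => ((hSmem α).mp hα).2.2
    · refine le_of_forall_lt fun c hc => ?_
      set b : ℝ := max c (m / 2) with hb
      have hbm : b < m := max_lt hc (by linarith)
      have hbpos : 0 < b := lt_of_lt_of_le (by linarith) (le_max_right _ _)
      set α : ℝ := (b + m) / 2 with hα
      have hα1 : α < m := by simp [hα]; linarith
      have hαS : α ∈ S := (hSmem α).mpr ⟨by simp [hα]; linarith,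
        lt_of_lt_of_le hα1 hm1, le_of_lt hα1⟩
      calc c ≤ b := le_max_left _ _
        _ < α := by simp [hα]; linarith
        _ ≤ sSup S := le_csSup hSbdd hαS
  have hsup : (⨆ θ : Θ0, (1 - F (T θ))) = m := by
    apply le_antisymm
    · refine ciSup_le fun θ => ?_
      have := hFmono (hT θhat0) (hT θ.1) (hmin θ.1 θ.2)
      simp only [hm]; linarith
    · have hb : BddAbove (Set.range fun θ : Θ0 => 1 - F (T θ.1)) := by
        refine ⟨m, ?_⟩
        rintro x ⟨θ, rfl⟩
        have := hFmono (hT θhat0) (hT θ.1) (hmin θ.1 θ.2)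
        simp only [hm]; linarith
      exact le_ciSup hb ⟨θhat0, hθhat0⟩
  refine ⟨?_, by rw [hsSup, hsup], by rw [hsup]⟩
  rw [hs, ← hS, hsSup, max_eq_right (le_of_lt hm0)]
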